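/- Let n ≥ 1 and let μ = (μ_1,…,μ_{n+1}) be real-valued random variables on a probability space (Ω, P) that are exchangeable, i.e., for every permutation σ of {1,…,n+1} the joint law of (μ_{σ(1)},…,μ_{σ(n+1)}) equals the joint law of (μ_1,…,μ_{n+1}). Then for every α ∈ (0,1), P( #{i ∈ {1,…,n+1} : μ_i ≥ μ_{n+1}} ≤ ⌊(n+1)α⌋ ) ≤ α. -/

import Mathlib

open MeasureTheory

lemma comb_lemma {m : ℕ} (x : Fin m → ℝ) (k : ℕ) :
    (Finset.univ.filter fun j : Fin m =>
      (Finset.univ.filter fun i => x j ≤ x i).card ≤ k).card ≤ k := by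
  set S := Finset.univ.filter fun j : Fin m =>
      (Finset.univ.filter fun i => x j ≤ x i).card ≤ k with hS
  rcases S.eq_empty_or_nonempty with h | h
  · simp [h]
  · obtain ⟨j0, hj0, hmin⟩ := S.exists_min_image x h
    have hsub : S ⊆ Finset.univ.filter fun i => x j0 ≤ x i := by
      intro i hi
      simp only [Finset.mem_filter, Finset.mem_univ, true_and]
      exact hmin i hi
    have hj0' : (Finset.univ.filter fun i => x j0 ≤ x i).card ≤ k := by
      have := hj0
      rw [hS, Finset.mem_filter] at this
      exact this.2
    exact le_trans (Finset.card_le_card hsub) hj0'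

lemma card_comp_perm {m : ℕ} (y : Fin m → ℝ) (σ : Equiv.Perm (Fin m)) (c : ℝ) :
    (Finset.univ.filter fun i => c ≤ y (σ i)).card
      = (Finset.univ.filter fun i => c ≤ y i).card := by
  apply Finset.card_bij' (fun i _ => σ i) (fun i _ => σ.symm i)
  · intro i hi; simp only [Finset.mem_filter, Finset.mem_univ, true_and] at hi ⊢; exact hi
  · intro i hi; simp only [Finset.mem_filter, Finset.mem_univ, true_and] at hi ⊢
    simpa using hi
  · intro i _; simp
  · intro i _; simp

theorem stmt_0
    {Ω : Type*} [MeasurableSpace Ω] (P : Measure Ω) [IsProbabilityMeasure P]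
    (n : ℕ) (hn : 1 ≤ n)
    (μ : Ω → Fin (n + 1) → ℝ) (hμ : Measurable μ)
    (hexch : ∀ σ : Equiv.Perm (Fin (n + 1)),
      Measure.map (fun ω => μ ω ∘ σ) P = Measure.map μ P)
    (α : ℝ) (hα : α ∈ Set.Ioo (0 : ℝ) 1) :
    P {ω | ((Finset.univ.filter
        (fun i : Fin (n + 1) => μ ω (Fin.last n) ≤ μ ω i)).card : ℤ)
          ≤ ⌊((n : ℝ) + 1) * α⌋}
      ≤ ENNReal.ofReal α := by
  obtain ⟨hα0, hα1⟩ := hα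
  have hfl0 : (0 : ℤ) ≤ ⌊((n : ℝ) + 1) * α⌋ := by
    apply Int.floor_nonneg.mpr
    positivity
  set k : ℕ := (⌊((n : ℝ) + 1) * α⌋).toNat with hk
  have hkfl : (k : ℤ) = ⌊((n : ℝ) + 1) * α⌋ := Int.toNat_of_nonneg hfl0
  set A : Fin (n + 1) → Set Ω := fun j =>
    {ω | (Finset.univ.filter fun i => μ ω j ≤ μ ω i).card ≤ k} with hA
  have hset : {ω | ((Finset.univ.filter
        (fun i : Fin (n + 1) => μ ω (Fin.last n) ≤ μ ω i)).card : ℤ)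
          ≤ ⌊((n : ℝ) + 1) * α⌋} = A (Fin.last n) := by
    ext ω
    simp only [hA, Set.mem_setOf_eq, ← hkfl, Int.ofNat_le]
  rw [hset]
  have hcard : ∀ j : Fin (n + 1), Measurable (fun x : Fin (n + 1) → ℝ =>
      (Finset.univ.filter fun i => x j ≤ x i).card) := by
    intro j
    have heq : (fun x : Fin (n + 1) → ℝ => (Finset.univ.filter fun i => x j ≤ x i).card)
        = fun x => ∑ i : Fin (n + 1), if x j ≤ x i then 1 else 0 := by
      funext x; rw [Finset.card_filter]
    rw [heq]
    exact Finset.measurable_sum _ fun i _ =>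
      Measurable.ite (measurableSet_le (measurable_pi_apply j) (measurable_pi_apply i))
        measurable_const measurable_const
  set B : Fin (n + 1) → Set (Fin (n + 1) → ℝ) := fun j =>
    {x | (Finset.univ.filter fun i => x j ≤ x i).card ≤ k} with hB
  have hBmeas : ∀ j, MeasurableSet (B j) := by
    intro j
    exact (hcard j) (measurableSet_Iic : MeasurableSet (Set.Iic k))
  have hApre : ∀ j, A j = μ ⁻¹' (B j) := fun j => rfl
  have hAmeas : ∀ j, MeasurableSet (A j) := fun j => hμ (hBmeas j)
  have hsame : ∀ j : Fin (n + 1), P (A j) = P (A (Fin.last n)) := by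
    intro j
    have hmeascomp : Measurable (fun ω => μ ω ∘ (Equiv.swap j (Fin.last n))) :=
      measurable_pi_lambda _ fun i =>
        (measurable_pi_apply ((Equiv.swap j (Fin.last n)) i)).comp hμ
    have h1 := congrArg (fun m : Measure (Fin (n + 1) → ℝ) => m (B (Fin.last n)))
      (hexch (Equiv.swap j (Fin.last n)))
    simp only [Measure.map_apply hmeascomp (hBmeas (Fin.last n)),
      Measure.map_apply hμ (hBmeas (Fin.last n))] at h1
    have hpre : (fun ω => μ ω ∘ (Equiv.swap j (Fin.last n))) ⁻¹' (B (Fin.last n)) = A j := by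
      ext ω
      simp only [hB, hA, Set.mem_preimage, Set.mem_setOf_eq, Function.comp_apply]
      rw [card_comp_perm (μ ω) (Equiv.swap j (Fin.last n)), Equiv.swap_apply_right]
    rw [hpre, ← hApre (Fin.last n)] at h1
    exact h1
  have hsum : ∑ j : Fin (n + 1), P (A j) ≤ (k : ENNReal) := by
    have h1 : ∑ j : Fin (n + 1), P (A j)
        = ∫⁻ ω, ∑ j : Fin (n + 1), (A j).indicator (fun _ => (1 : ENNReal)) ω ∂P := by
      rw [lintegral_finset_sum]
      · congr 1
        ext j
        rw [lintegral_indicator (hAmeas j)]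
        simp
      · intro j _
        exact (measurable_const.indicator (hAmeas j))
    rw [h1]
    calc ∫⁻ ω, ∑ j : Fin (n + 1), (A j).indicator (fun _ => (1 : ENNReal)) ω ∂P
        ≤ ∫⁻ _, (k : ENNReal) ∂P := by
          apply lintegral_mono
          intro ω
          dsimp only
          have hcount : ∑ j : Fin (n + 1), (A j).indicator (fun _ => (1 : ENNReal)) ω
              = ((Finset.univ.filter fun j : Fin (n + 1) => ω ∈ A j).card : ENNReal) := by
            rw [Finset.card_filter]
            push_cast
            congr 1
            ext j
            by_cases h : ω ∈ A j <;> simp [Set.indicator, h]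
          rw [hcount]
          have hle : (Finset.univ.filter fun j : Fin (n + 1) => ω ∈ A j).card ≤ k := by
            have := comb_lemma (μ ω) k
            convert this using 2
            ext j
            simp [hA]
          exact_mod_cast hle
      _ = (k : ENNReal) := by simp
  have hconst : ∑ j : Fin (n + 1), P (A j) = (n + 1 : ENNReal) * P (A (Fin.last n)) := by
    rw [Finset.sum_congr rfl fun j _ => hsame j]
    simp [Finset.card_univ, mul_comm]
  rw [hconst] at hsum
  have hk_le : (k : ENNReal) ≤ (n + 1 : ENNReal) * ENNReal.ofReal α := by
    have hkr : (k : ℝ) ≤ ((n : ℝ) + 1) * α := by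
      calc (k : ℝ) = ((⌊((n : ℝ) + 1) * α⌋ : ℤ) : ℝ) := by exact_mod_cast congrArg (Int.cast) hkfl
        _ ≤ ((n : ℝ) + 1) * α := Int.floor_le _
    calc (k : ENNReal) = ENNReal.ofReal (k : ℝ) := by simp
      _ ≤ ENNReal.ofReal (((n : ℝ) + 1) * α) := ENNReal.ofReal_le_ofReal hkr
      _ = ENNReal.ofReal ((n : ℝ) + 1) * ENNReal.ofReal α := by
          rw [ENNReal.ofReal_mul (by positivity)]
      _ = (n + 1 : ENNReal) * ENNReal.ofReal α := by
          congr 1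
          rw [ENNReal.ofReal_add (by positivity) zero_le_one]
          simp
  have hfinal := le_trans hsum hk_le
  have hne0 : (n + 1 : ENNReal) ≠ 0 := by
    simp
  have hnetop : (n + 1 : ENNReal) ≠ ⊤ := by
    simp [ENNReal.add_ne_top]
  exact (ENNReal.mul_le_mul_iff_right hne0 hnetop).mp hfinal
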